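/- arXiv:2602.18827 — 5 statements merged into one kernel-verified Lean document; each statement's English description precedes it below -/
import Mathlib

section
/- Global minimizer in the aggregation-dominated regime (Proposition 4.4(i), inequality part): Let d ≥ 3, 1+2/d < m < (d+2)/(d−2), α = (d+2−(d−2)m)/(dm), and M > 0. Assume C_* > 0 is a constant such that the Gagliardo–Nirenberg–Sobolev inequality (∫u^{m+1} dx)^{(α+2)/(m+1)} ≤ C_* (∫u dx)^α ∫|∇u|² dx holds for every u ∈ 𝒞. Set P_* = ((α+2)/(2 C_* M^α))^{1/(m−α−1)}. Then for every v ∈ 𝒞 with ∫v dx = M and (∫v^{m+1} dx)^{1/(m+1)} = P_*, one has F(v) ≥ ((dm−(d+2))/((d+2)(m+1))) P_*^{m+1}, and this lower bound is strictly positive. -/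
open MeasureTheory Real

noncomputable section

/-- The free energy `F(u) = (1/2)∫|∇u|² dx − (1/(m+1))∫u^{m+1} dx`. -/
def freeEnergy {d : ℕ} (m : ℝ) (u : EuclideanSpace ℝ (Fin d) → ℝ) : ℝ :=
  (1 / 2) * (∫ x, ‖gradient u x‖ ^ 2) - (1 / (m + 1)) * ∫ x, u x ^ (m + 1)

/-- **Global minimizer in the aggregation-dominated regime**
(Proposition 4.4(i), inequality part). -/
theorem aggregation_dominated_lower_bound (d : ℕ) (hd : 3 ≤ d) (m : ℝ)
    (hm1 : 1 + 2 / (d : ℝ) < m) (hm2 : m < ((d : ℝ) + 2) / ((d : ℝ) - 2))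
    (α : ℝ) (hα : α = ((d : ℝ) + 2 - ((d : ℝ) - 2) * m) / ((d : ℝ) * m))
    (M : ℝ) (hM : 0 < M) (Cstar : ℝ) (hC : 0 < Cstar)
    (hGNS : ∀ u : EuclideanSpace ℝ (Fin d) → ℝ,
      (∀ x, 0 ≤ u x) → ContDiff ℝ 1 u →
      Integrable u → Integrable (fun x => ‖gradient u x‖ ^ 2) →
      Integrable (fun x => u x ^ (m + 1)) →
      (∫ x, u x ^ (m + 1)) ^ ((α + 2) / (m + 1)) ≤
        Cstar * (∫ x, u x) ^ α * ∫ x, ‖gradient u x‖ ^ 2)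
    (Pstar : ℝ) (hP : Pstar = ((α + 2) / (2 * Cstar * M ^ α)) ^ (1 / (m - α - 1)))
    (v : EuclideanSpace ℝ (Fin d) → ℝ)
    (hvpos : ∀ x, 0 ≤ v x) (hv : ContDiff ℝ 1 v)
    (hvint : Integrable v) (hvgrad : Integrable (fun x => ‖gradient v x‖ ^ 2))
    (hvpow : Integrable (fun x => v x ^ (m + 1)))
    (hvmass : (∫ x, v x) = M)
    (hvnorm : (∫ x, v x ^ (m + 1)) ^ (1 / (m + 1)) = Pstar) :
    freeEnergy m v ≥
      (((d : ℝ) * m - ((d : ℝ) + 2)) / (((d : ℝ) + 2) * (m + 1))) * Pstar ^ (m + 1) ∧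
    0 < (((d : ℝ) * m - ((d : ℝ) + 2)) / (((d : ℝ) + 2) * (m + 1))) * Pstar ^ (m + 1) := by
  have hdpos : (0:ℝ) < d := by
    have : (3:ℝ) ≤ d := by exact_mod_cast hd
    linarith
  have hm0 : (0:ℝ) < m := lt_trans (by positivity) hm1
  have hm1pos : (0:ℝ) < m + 1 := by linarith
  have hdm : (d:ℝ) + 2 < d * m := by
    have h1 : (d:ℝ) * (1 + 2 / d) < d * m := (mul_lt_mul_iff_right₀ hdpos).mpr hm1
    have h2 : (d:ℝ) * (1 + 2 / d) = d + 2 := by field_simp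
    linarith
  have hdm0 : (0:ℝ) < d * m := by positivity
  have hα2 : α + 2 = ((d:ℝ) + 2) * (m + 1) / (d * m) := by
    rw [hα]; field_simp; ring
  have hα2pos : (0:ℝ) < α + 2 := by
    rw [hα2]; exact div_pos (by nlinarith) hdm0
  have hmα : m - α - 1 = (m + 1) * ((d:ℝ) * m - (d + 2)) / (d * m) := by
    rw [hα]; field_simp; ring
  have hmαpos : (0:ℝ) < m - α - 1 := by
    rw [hmα]; exact div_pos (by nlinarith) hdm0
  have hMα : (0:ℝ) < M ^ α := Real.rpow_pos_of_pos hM α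
  have hbase : (0:ℝ) < (α + 2) / (2 * Cstar * M ^ α) :=
    div_pos hα2pos (by positivity)
  have hP0 : 0 < Pstar := by
    rw [hP]; exact Real.rpow_pos_of_pos hbase _
  have hPpow : Pstar ^ (m - α - 1) = (α + 2) / (2 * Cstar * M ^ α) := by
    rw [hP, one_div, Real.rpow_inv_rpow hbase.le (ne_of_gt hmαpos)]
  have hkey : 2 * Cstar * M ^ α * Pstar ^ (m - α - 1) = α + 2 := by
    rw [hPpow]; field_simp
  have hInn : 0 ≤ ∫ x, v x ^ (m + 1) :=
    integral_nonneg fun x => Real.rpow_nonneg (hvpos x) _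
  have hIP : (∫ x, v x ^ (m + 1)) = Pstar ^ (m + 1) := by
    have := congrArg (fun t : ℝ => t ^ (m + 1)) hvnorm
    simpa [one_div, Real.rpow_inv_rpow hInn (ne_of_gt hm1pos)] using this
  have hg := hGNS v hvpos hv hvint hvgrad hvpow
  rw [hvmass, hIP] at hg
  set G := ∫ x, ‖gradient v x‖ ^ 2 with hG
  have hg2 : Pstar ^ (α + 2) ≤ Cstar * M ^ α * G := by
    have hexp : (m + 1) * ((α + 2) / (m + 1)) = α + 2 := by field_simp
    calc Pstar ^ (α + 2) = (Pstar ^ (m + 1)) ^ ((α + 2) / (m + 1)) := by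
          rw [← Real.rpow_mul hP0.le, hexp]
      _ ≤ Cstar * M ^ α * G := hg
  have h3 : 2 * Pstar ^ (m + 1) ≤ (α + 2) * G := by
    have hstep := mul_le_mul_of_nonneg_left hg2
      (by positivity : (0:ℝ) ≤ 2 * Pstar ^ (m - α - 1))
    calc 2 * Pstar ^ (m + 1)
        = 2 * Pstar ^ (m - α - 1) * Pstar ^ (α + 2) := by
          rw [mul_assoc, ← Real.rpow_add hP0]; ring_nf
      _ ≤ 2 * Pstar ^ (m - α - 1) * (Cstar * M ^ α * G) := hstep
      _ = (2 * Cstar * M ^ α * Pstar ^ (m - α - 1)) * G := by ring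
      _ = (α + 2) * G := by rw [hkey]
  have hPm1pos : 0 < Pstar ^ (m + 1) := Real.rpow_pos_of_pos hP0 _
  have hco : 1 / (α + 2) - 1 / (m + 1)
      = ((d:ℝ) * m - (d + 2)) / (((d:ℝ) + 2) * (m + 1)) := by
    rw [hα2]; field_simp
  constructor
  · have hGb : Pstar ^ (m + 1) / (α + 2) ≤ (1 / 2) * G := by
      rw [div_le_iff₀ hα2pos]; linarith
    have hcP : (((d:ℝ) * m - ((d:ℝ) + 2)) / (((d:ℝ) + 2) * (m + 1))) * Pstar ^ (m + 1)
        = Pstar ^ (m + 1) / (α + 2) - Pstar ^ (m + 1) / (m + 1) := by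
      rw [← hco]; ring
    rw [freeEnergy, hIP, ← hG, ge_iff_le, hcP]
    have : (1 / (m + 1)) * Pstar ^ (m + 1) = Pstar ^ (m + 1) / (m + 1) := by ring
    linarith [hGb]
  · apply mul_pos _ hPm1pos
    exact div_pos (by linarith) (by nlinarith)
end
end

section
/- Lower bound on the L^{m+1} norm of steady states (Proposition 4.4(ii), inequality part): Let d ≥ 3, 1+2/d < m < (d+2)/(d−2), α = (d+2−(d−2)m)/(dm), and M > 0. Assume C_* > 0 is a constant such that the Gagliardo–Nirenberg–Sobolev inequality (∫u^{m+1} dx)^{(α+2)/(m+1)} ≤ C_* (∫u dx)^α ∫|∇u|² dx holds for every u ∈ 𝒞. Set P_* = ((α+2)/(2 C_* M^α))^{1/(m−α−1)}. Let w ∈ 𝒞 satisfy ∫w dx = M, ∫w^{m+1} dx > 0, and the Pohozaev identity (dm/(m+1)) ∫w^{m+1} dx = ((d+2)/2) ∫|∇w|² dx. Then (∫w^{m+1} dx)^{1/(m+1)} ≥ P_*, and consequently F(w) ≥ ((dm−(d+2))/((d+2)(m+1))) P_*^{m+1}. -/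
open MeasureTheory Real

noncomputable section

/-- **Lower bound on the `L^{m+1}` norm of steady states**
(Proposition 4.4(ii), inequality part). -/
theorem steady_state_norm_lower_bound (d : ℕ) (hd : 3 ≤ d) (m : ℝ)
    (hm1 : 1 + 2 / (d : ℝ) < m) (hm2 : m < ((d : ℝ) + 2) / ((d : ℝ) - 2))
    (α : ℝ) (hα : α = ((d : ℝ) + 2 - ((d : ℝ) - 2) * m) / ((d : ℝ) * m))
    (M : ℝ) (hM : 0 < M) (Cstar : ℝ) (hC : 0 < Cstar)
    (hGNS : ∀ u : EuclideanSpace ℝ (Fin d) → ℝ,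
      (∀ x, 0 ≤ u x) → ContDiff ℝ 1 u →
      Integrable u → Integrable (fun x => ‖gradient u x‖ ^ 2) →
      Integrable (fun x => u x ^ (m + 1)) →
      (∫ x, u x ^ (m + 1)) ^ ((α + 2) / (m + 1)) ≤
        Cstar * (∫ x, u x) ^ α * ∫ x, ‖gradient u x‖ ^ 2)
    (Pstar : ℝ) (hP : Pstar = ((α + 2) / (2 * Cstar * M ^ α)) ^ (1 / (m - α - 1)))
    (w : EuclideanSpace ℝ (Fin d) → ℝ)
    (hwpos : ∀ x, 0 ≤ w x) (hw : ContDiff ℝ 1 w)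
    (hwint : Integrable w) (hwgrad : Integrable (fun x => ‖gradient w x‖ ^ 2))
    (hwpow : Integrable (fun x => w x ^ (m + 1)))
    (hwmass : (∫ x, w x) = M)
    (hwpow_pos : 0 < ∫ x, w x ^ (m + 1))
    (hpoho : ((d : ℝ) * m / (m + 1)) * ∫ x, w x ^ (m + 1) =
      (((d : ℝ) + 2) / 2) * ∫ x, ‖gradient w x‖ ^ 2) :
    (∫ x, w x ^ (m + 1)) ^ (1 / (m + 1)) ≥ Pstar ∧
    freeEnergy m w ≥
      (((d : ℝ) * m - ((d : ℝ) + 2)) / (((d : ℝ) + 2) * (m + 1))) * Pstar ^ (m + 1) := by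
  unfold freeEnergy
  have hd3 : (3:ℝ) ≤ (d:ℝ) := by exact_mod_cast hd
  have hd0 : (0:ℝ) < d := by linarith
  have hm1' : 1 < m := by
    have h2d : (0:ℝ) < 2 / d := by positivity
    linarith
  have hm1pos : (0:ℝ) < m + 1 := by linarith
  have hdm : (d:ℝ) + 2 < (d:ℝ) * m := by
    have h := mul_lt_mul_of_pos_left hm1 hd0
    have h2 : (d:ℝ) * (1 + 2 / d) = d + 2 := by field_simp
    linarith [h2 ▸ h]
  have hdm0 : (0:ℝ) < (d:ℝ) * m := by nlinarith
  set P := ∫ x, w x ^ (m+1) with hPdef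
  set G := ∫ x, ‖gradient w x‖^2 with hGdef
  clear_value P G
  have hα2 : α + 2 = ((d:ℝ)+2)*(m+1)/((d:ℝ)*m) := by
    rw [hα]; field_simp; ring
  have hα2pos : 0 < α + 2 := by rw [hα2]; positivity
  have hs : 0 < m - α - 1 := by
    have h : α + 2 < m + 1 := by
      rw [hα2, div_lt_iff₀ hdm0]; nlinarith
    linarith
  have hG : G = 2/(α+2) * P := by
    have hα2ne : α + 2 ≠ 0 := ne_of_gt hα2pos
    rw [hα2] at hα2ne ⊢
    field_simp at hpoho ⊢
    nlinarith [hpoho]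
  have hgns := hGNS w hwpos hw hwint hwgrad hwpow
  rw [hwmass, ← hPdef, ← hGdef, hG] at hgns
  have hQpos : 0 < (α+2)/(2*Cstar*M^α) := by positivity
  -- from GNS: P ^ ((α+2)/(m+1)) ≤ (2*Cstar*M^α/(α+2)) * P
  have h1 : P ^ ((α+2)/(m+1)) ≤ (2*Cstar*M^α/(α+2)) * P := by
    calc P ^ ((α+2)/(m+1)) ≤ Cstar * M ^ α * (2/(α+2) * P) := hgns
    _ = (2*Cstar*M^α/(α+2)) * P := by ring
  have key : (α+2)/(2*Cstar*M^α) ≤ P ^ ((m-α-1)/(m+1)) := by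
    have hPne : P ≠ 0 := ne_of_gt hwpow_pos
    have h2 : P ^ ((α+2)/(m+1) - 1) ≤ 2*Cstar*M^α/(α+2) := by
      rw [Real.rpow_sub hwpow_pos, Real.rpow_one, div_le_iff₀ hwpow_pos]
      exact h1
    have h3 : (α+2)/(m+1) - 1 = -((m-α-1)/(m+1)) := by field_simp; ring
    rw [h3, Real.rpow_neg hwpow_pos.le] at h2
    have hPt : 0 < P ^ ((m-α-1)/(m+1)) := Real.rpow_pos_of_pos hwpow_pos _
    rw [inv_le_iff_one_le_mul₀ hPt] at h2
    have h4 := mul_le_mul_of_nonneg_left h2 hα2pos.le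
    rw [mul_one] at h4
    rw [div_le_iff₀ (by positivity : (0:ℝ) < 2*Cstar*M^α)]
    calc α + 2 ≤ (α+2) * (2*Cstar*M^α/(α+2) * P ^ ((m-α-1)/(m+1))) := h4
      _ = P ^ ((m-α-1)/(m+1)) * (2*Cstar*M^α) := by
          field_simp
  have part1 : Pstar ≤ P ^ (1/(m+1)) := by
    rw [hP]
    calc ((α + 2) / (2 * Cstar * M ^ α)) ^ (1 / (m - α - 1))
        ≤ (P ^ ((m-α-1)/(m+1))) ^ (1 / (m - α - 1)) :=
          Real.rpow_le_rpow hQpos.le key (by positivity)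
      _ = P ^ (1/(m+1)) := by
          rw [← Real.rpow_mul hwpow_pos.le]
          congr 1
          field_simp
  have hPstar_pos : 0 < Pstar := by
    rw [hP]; exact Real.rpow_pos_of_pos hQpos _
  have part2 : Pstar ^ (m+1) ≤ P := by
    calc Pstar ^ (m+1) ≤ (P ^ (1/(m+1))) ^ (m+1) :=
          Real.rpow_le_rpow hPstar_pos.le part1 hm1pos.le
      _ = P := by
          rw [← Real.rpow_mul hwpow_pos.le]
          rw [one_div_mul_cancel (ne_of_gt hm1pos), Real.rpow_one]
  refine ⟨part1, ?_⟩
  have hF : 1/2 * G - 1/(m+1) * P = (((d:ℝ)*m - ((d:ℝ)+2)) / (((d:ℝ)+2)*(m+1))) * P := by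
    rw [hG, hα2]
    field_simp
  have hc : 0 ≤ ((d:ℝ)*m - ((d:ℝ)+2)) / (((d:ℝ)+2)*(m+1)) := by
    exact div_nonneg (by linarith) (by positivity)
  have := mul_le_mul_of_nonneg_left part2 hc
  rw [ge_iff_le]
  linarith [hF, this]
end
end

section
/- Global lower bound in the diffusion-dominated regime (Proposition 4.7, inequality part): Let d ≥ 3, 0 < m < 1+2/d, α = (d+2−(d−2)m)/(dm), and M > 0. Assume C_* > 0 is a constant such that the Gagliardo–Nirenberg–Sobolev inequality (∫u^{m+1} dx)^{(α+2)/(m+1)} ≤ C_* (∫u dx)^α ∫|∇u|² dx holds for every u ∈ 𝒞. Set P_* = ((α+2)/(2 C_* M^α))^{1/(m−α−1)}. Then for every u ∈ 𝒞 with ∫u dx = M, one has F(u) ≥ ((dm−(d+2))/((d+2)(m+1))) P_*^{m+1}; here the right-hand side is strictly negative. -/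
open MeasureTheory Real

noncomputable section

set_option maxHeartbeats 1000000 in
/-- **Global lower bound in the diffusion-dominated regime**
(Proposition 4.7, inequality part). -/
theorem diffusion_dominated_lower_bound (d : ℕ) (hd : 3 ≤ d) (m : ℝ)
    (hm0 : 0 < m) (hm1 : m < 1 + 2 / (d : ℝ))
    (α : ℝ) (hα : α = ((d : ℝ) + 2 - ((d : ℝ) - 2) * m) / ((d : ℝ) * m))
    (M : ℝ) (hM : 0 < M) (Cstar : ℝ) (hC : 0 < Cstar)
    (hGNS : ∀ u : EuclideanSpace ℝ (Fin d) → ℝ,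
      (∀ x, 0 ≤ u x) → ContDiff ℝ 1 u →
      Integrable u → Integrable (fun x => ‖gradient u x‖ ^ 2) →
      Integrable (fun x => u x ^ (m + 1)) →
      (∫ x, u x ^ (m + 1)) ^ ((α + 2) / (m + 1)) ≤
        Cstar * (∫ x, u x) ^ α * ∫ x, ‖gradient u x‖ ^ 2)
    (Pstar : ℝ) (hP : Pstar = ((α + 2) / (2 * Cstar * M ^ α)) ^ (1 / (m - α - 1)))
    (u : EuclideanSpace ℝ (Fin d) → ℝ)
    (hupos : ∀ x, 0 ≤ u x) (hu : ContDiff ℝ 1 u)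
    (huint : Integrable u) (hugrad : Integrable (fun x => ‖gradient u x‖ ^ 2))
    (hupow : Integrable (fun x => u x ^ (m + 1)))
    (humass : (∫ x, u x) = M) :
    freeEnergy m u ≥
      (((d : ℝ) * m - ((d : ℝ) + 2)) / (((d : ℝ) + 2) * (m + 1))) * Pstar ^ (m + 1) ∧
    (((d : ℝ) * m - ((d : ℝ) + 2)) / (((d : ℝ) + 2) * (m + 1))) * Pstar ^ (m + 1) < 0 := by
  have hd0 : (0:ℝ) < d := by positivity
  have hm1' : (0:ℝ) < m + 1 := by linarith
  have hdm : (0:ℝ) < (d:ℝ) * m := by positivity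
  have hdm2 : (d:ℝ) * m < (d:ℝ) + 2 := by
    calc (d:ℝ) * m < (d:ℝ) * (1 + 2 / d) := mul_lt_mul_of_pos_left hm1 hd0
      _ = (d:ℝ) + 2 := by field_simp
  -- key algebraic identities
  have hα2 : α + 2 = ((d:ℝ) + 2) * (m + 1) / ((d:ℝ) * m) := by
    rw [hα]; field_simp; ring
  set q : ℝ := ((d:ℝ) + 2) / ((d:ℝ) * m) with hqdef
  have hq1 : 1 < q := (one_lt_div hdm).mpr hdm2
  have hq0 : 0 < q := lt_trans one_pos hq1
  have hqm : q * (m + 1) = α + 2 := by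
    rw [hα2, hqdef]; field_simp
  have hα2pos : 0 < α + 2 := by rw [hα2]; positivity
  have hdq : (d:ℝ) * m * q = (d:ℝ) + 2 := by
    rw [hqdef]; field_simp
  clear_value q
  have hms : m - α - 1 = (m + 1) * (1 - q) := by nlinarith [hqm]
  have hmα : m - α - 1 < 0 := by rw [hms]; nlinarith
  have hmαne : m - α - 1 ≠ 0 := ne_of_lt hmα
  set K : ℝ := Cstar * M ^ α with hKdef
  have hK : 0 < K := by
    have := Real.rpow_pos_of_pos hM α
    positivity
  set base : ℝ := (α + 2) / (2 * K) with hbase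
  have hbasepos : 0 < base := by positivity
  have hPb : Pstar = base ^ (1 / (m - α - 1)) := by
    rw [hP, hbase, hKdef, mul_assoc]
  have hP0 : 0 < Pstar := by rw [hPb]; exact Real.rpow_pos_of_pos hbasepos _
  set t : ℝ := Pstar ^ (m + 1) with htdef
  have ht0 : 0 < t := Real.rpow_pos_of_pos hP0 _
  -- t ^ (q - 1) = 2K/(α+2)
  have htq1 : t ^ (q - 1) = 2 * K / (α + 2) := by
    have h1 : t ^ (q - 1) = base ^ ((1 / (m - α - 1)) * (m + 1) * (q - 1)) := by
      rw [htdef, hPb, ← Real.rpow_mul hbasepos.le, ← Real.rpow_mul hbasepos.le]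
    have h2 : (1 / (m - α - 1)) * (m + 1) * (q - 1) = -1 := by
      have h1q : (1:ℝ) - q ≠ 0 := by intro h; nlinarith
      rw [hms]
      field_simp
      ring
    rw [h1, h2, Real.rpow_neg_one, hbase, inv_div]
  have htq : t ^ q = t * (2 * K / (α + 2)) := by
    have hq' : q = 1 + (q - 1) := by ring
    rw [hq', Real.rpow_add ht0, Real.rpow_one, htq1]
  -- notation for the integrals
  set I : ℝ := ∫ x, u x ^ (m + 1) with hIdef
  set G : ℝ := ∫ x, ‖gradient u x‖ ^ 2 with hGdef
  have hI0 : 0 ≤ I := integral_nonneg fun x => Real.rpow_nonneg (hupos x) _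
  have hG0 : 0 ≤ G := integral_nonneg fun x => by positivity
  -- GNS gives I^q ≤ K * G
  have hGNSu := hGNS u hupos hu huint hugrad hupow
  rw [humass] at hGNSu
  have hqeq : (α + 2) / (m + 1) = q := by
    rw [← hqm]; field_simp
  have hIq : I ^ q ≤ K * G := by
    rw [← hqeq]
    calc I ^ ((α + 2) / (m + 1)) ≤ Cstar * M ^ α * G := hGNSu
      _ = K * G := by rw [hKdef]
  -- weighted AM-GM : I * t^(q-1) ≤ I^q / q + (1 - 1/q) * t^q
  have hamgm : I * t ^ (q - 1) ≤ (1 / q) * I ^ q + (1 - 1 / q) * t ^ q := by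
    have hw1 : (0:ℝ) ≤ 1 / q := by positivity
    have hw2 : (0:ℝ) ≤ 1 - 1 / q := by
      have : 1 / q < 1 := by rw [div_lt_one hq0]; exact hq1
      linarith
    have hp1 : (0:ℝ) ≤ I ^ q := Real.rpow_nonneg hI0 _
    have hp2 : (0:ℝ) ≤ t ^ q := Real.rpow_nonneg ht0.le _
    have hsum : 1 / q + (1 - 1 / q) = 1 := by ring
    have hgm := Real.geom_mean_le_arith_mean2_weighted hw1 hw2 hp1 hp2 hsum
    have e1 : (I ^ q) ^ (1 / q) = I := by
      rw [← Real.rpow_mul hI0, mul_one_div, div_self (ne_of_gt hq0), Real.rpow_one]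
    have e2 : (t ^ q) ^ (1 - 1 / q) = t ^ (q - 1) := by
      rw [← Real.rpow_mul ht0.le]
      congr 1
      field_simp
    rw [e1, e2] at hgm
    exact hgm
  -- combine
  have hF : freeEnergy m u = (1 / 2) * G - (1 / (m + 1)) * I := rfl
  clear_value t K base I G
  have hrhs : (((d:ℝ) * m - ((d:ℝ) + 2)) / (((d:ℝ) + 2) * (m + 1))) * t
      = -((q - 1) * t ^ q / (2 * K)) := by
    rw [htq, ← hdq, ← hqm]
    have hKne : K ≠ 0 := ne_of_gt hK
    have hqne : q ≠ 0 := ne_of_gt hq0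
    have hmne : m + 1 ≠ 0 := ne_of_gt hm1'
    have hdmne : (d:ℝ) * m ≠ 0 := ne_of_gt hdm
    field_simp
    ring
  constructor
  · rw [hF, ge_iff_le, hrhs]
    have h3 : I * (2 * K / (α + 2)) ≤ 1 / q * I ^ q + (1 - 1 / q) * t ^ q := by
      rw [← htq1]; exact hamgm
    have h4 : 1 / (m + 1) = q / (α + 2) := by
      rw [← hqm]; field_simp
    have hmul := mul_le_mul_of_nonneg_left h3 (by positivity : (0:ℝ) ≤ q / (2 * K))
    have h5 : q / (2 * K) * (I * (2 * K / (α + 2))) = q / (α + 2) * I := by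
      field_simp
    have h6 : q / (2 * K) * (1 / q * I ^ q + (1 - 1 / q) * t ^ q)
        = 1 / (2 * K) * I ^ q + (q - 1) * t ^ q / (2 * K) := by
      field_simp
    rw [h5, h6] at hmul
    have hG2 : 1 / (2 * K) * I ^ q ≤ 1 / 2 * G := by
      have h := mul_le_mul_of_nonneg_left hIq (by positivity : (0:ℝ) ≤ 1 / (2 * K))
      calc 1 / (2 * K) * I ^ q ≤ 1 / (2 * K) * (K * G) := h
        _ = 1 / 2 * G := by field_simp
    rw [h4]
    linarith
  · apply mul_neg_of_neg_of_pos
    · apply div_neg_of_neg_of_pos <;> nlinarith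
    · exact ht0
end
end

section
/- Optimized mass–concentration–confinement inequality (used in Theorem 5.3): Let d ≥ 1 and m > 0. There exists a constant c > 0 depending only on d and m such that for every nonnegative measurable function u : ℝ^d → ℝ with ∫u^{m+1} dx < ∞ and ∫‖x‖² u dx < ∞, ∫_{ℝ^d} u dx ≤ c (∫_{ℝ^d} u^{m+1} dx)^{2/(dm+2(m+1))} (∫_{ℝ^d} ‖x‖² u(x) dx)^{dm/(dm+2(m+1))}. -/
open MeasureTheory Real
open scoped ENNReal NNReal

noncomputable section

lemma mcc_key {a b : ℝ} (ha : 0 < a) (hb : 0 < b) (p q r : ℝ) :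
    (a ^ p * b ^ q) ^ r = a ^ (p * r) * b ^ (q * r) := by
  rw [Real.mul_rpow (by positivity) (by positivity), ← Real.rpow_mul ha.le,
    ← Real.rpow_mul hb.le]

lemma mcc_rpow_aux {a b v : ℝ} (ha : 0 < a) (hb : 0 < b) (hv : 0 < v)
    {m : ℝ} (hm : 0 < m) (d : ℕ) (hd : 1 ≤ d) :
    ((a ^ (-(1 / ((d : ℝ) * m + 2 * (m + 1)))) *
        b ^ ((m + 1) / ((d : ℝ) * m + 2 * (m + 1)))) ^ d * v) ^ (m / (m + 1)) *
        a ^ (1 / (m + 1)) +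
      ((a ^ (-(1 / ((d : ℝ) * m + 2 * (m + 1)))) *
        b ^ ((m + 1) / ((d : ℝ) * m + 2 * (m + 1))))⁻¹) ^ 2 * b =
    (v ^ (m / (m + 1)) + 1) *
      (a ^ (2 / ((d : ℝ) * m + 2 * (m + 1))) *
        b ^ ((d : ℝ) * m / ((d : ℝ) * m + 2 * (m + 1)))) := by
  have hd' : (1 : ℝ) ≤ (d : ℝ) := by exact_mod_cast hd
  have hD : 0 < (d : ℝ) * m + 2 * (m + 1) := by nlinarith
  set D := (d : ℝ) * m + 2 * (m + 1) with hDdef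
  have h1 : (0 : ℝ) < m + 1 := by linarith
  set p : ℝ := -(1 / D)
  set q : ℝ := (m + 1) / D
  have hR : 0 < a ^ p * b ^ q := by positivity
  have e1 : ((a ^ p * b ^ q) ^ d * v) ^ (m / (m + 1)) * a ^ (1 / (m + 1)) =
      v ^ (m / (m + 1)) * (a ^ (2 / D) * b ^ ((d : ℝ) * m / D)) := by
    rw [← Real.rpow_natCast (a ^ p * b ^ q) d, mcc_key ha hb,
      Real.mul_rpow (by positivity) hv.le, mcc_key ha hb]
    have ea : a ^ (p * (d : ℝ) * (m / (m + 1))) * a ^ (1 / (m + 1)) = a ^ (2 / D) := by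
      rw [← Real.rpow_add ha]
      congr 1
      simp only [p, hDdef]
      field_simp
      ring
    have eb : b ^ (q * (d : ℝ) * (m / (m + 1))) = b ^ ((d : ℝ) * m / D) := by
      congr 1
      simp only [q]
      field_simp
    rw [← ea, ← eb]
    ring
  have e2 : ((a ^ p * b ^ q)⁻¹) ^ 2 * b = a ^ (2 / D) * b ^ ((d : ℝ) * m / D) := by
    have : ((a ^ p * b ^ q)⁻¹) ^ 2 = (a ^ p * b ^ q) ^ (-(2 : ℝ)) := by
      rw [Real.rpow_neg hR.le, Real.rpow_two, inv_pow]
    rw [this, mcc_key ha hb]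
    have ea : a ^ (p * (-(2 : ℝ))) = a ^ (2 / D) := by
      congr 1
      simp only [p]
      field_simp
    have eb : b ^ (q * (-(2 : ℝ))) * b = b ^ ((d : ℝ) * m / D) := by
      nth_rewrite 2 [← Real.rpow_one b]
      rw [← Real.rpow_add hb]
      congr 1
      simp only [q, hDdef]
      field_simp
      ring
    rw [mul_assoc, ea, eb]
  rw [e1, e2]
  ring

set_option maxHeartbeats 1000000 in
/-- **Optimized mass–concentration–confinement inequality** (used in Theorem 5.3). -/
theorem optimized_mass_concentration_confinement (d : ℕ) (hd : 1 ≤ d) (m : ℝ)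
    (hm : 0 < m) :
    ∃ c : ℝ, 0 < c ∧
      ∀ u : EuclideanSpace ℝ (Fin d) → ℝ, Measurable u → (∀ x, 0 ≤ u x) →
        (∫⁻ x, ENNReal.ofReal (u x ^ (m + 1))) < ⊤ →
        (∫⁻ x, ENNReal.ofReal (‖x‖ ^ 2 * u x)) < ⊤ →
        ∫⁻ x, ENNReal.ofReal (u x) ≤
          ENNReal.ofReal c *
            (∫⁻ x, ENNReal.ofReal (u x ^ (m + 1))) ^
              (2 / ((d : ℝ) * m + 2 * (m + 1))) *
            (∫⁻ x, ENNReal.ofReal (‖x‖ ^ 2 * u x)) ^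
              ((d : ℝ) * m / ((d : ℝ) * m + 2 * (m + 1))) := by
  have hd' : (1 : ℝ) ≤ (d : ℝ) := by exact_mod_cast hd
  have hD : 0 < (d : ℝ) * m + 2 * (m + 1) := by nlinarith
  have h1 : (0 : ℝ) < m + 1 := by linarith
  haveI : Nontrivial (EuclideanSpace ℝ (Fin d)) :=
    Module.nontrivial_of_finrank_pos (R := ℝ)
      (by rw [finrank_euclideanSpace_fin]; exact hd)
  set v : ℝ := (volume (Metric.ball (0 : EuclideanSpace ℝ (Fin d)) 1)).toReal with hvdef
  have hv : 0 < v :=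
    ENNReal.toReal_pos (Metric.measure_ball_pos volume 0 one_pos).ne' measure_ball_lt_top.ne
  refine ⟨v ^ (m / (m + 1)) + 1, by positivity, ?_⟩
  intro u hu hu0 hA hB
  set A := ∫⁻ x, ENNReal.ofReal (u x ^ (m + 1)) with hAdef
  set B := ∫⁻ x, ENNReal.ofReal (‖x‖ ^ 2 * u x) with hBdef
  -- trivial case A = 0
  by_cases hA0 : A = 0
  · have hz : (fun x => ENNReal.ofReal (u x ^ (m + 1))) =ᵐ[volume] 0 :=
      (lintegral_eq_zero_iff (by measurability)).1 hA0
    have hz' : (fun x => ENNReal.ofReal (u x)) =ᵐ[volume] 0 := by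
      filter_upwards [hz] with x hx
      simp only [Pi.zero_apply, ENNReal.ofReal_eq_zero] at hx ⊢
      by_contra h
      push_neg at h
      exact absurd hx (not_le.2 (Real.rpow_pos_of_pos (lt_of_le_of_ne (hu0 x) (by linarith)) _))
    rw [lintegral_congr_ae hz']
    simp
  by_cases hB0 : B = 0
  · have hz : (fun x => ENNReal.ofReal (‖x‖ ^ 2 * u x)) =ᵐ[volume] 0 :=
      (lintegral_eq_zero_iff (by measurability)).1 hB0
    have h0 : ∀ᵐ x : EuclideanSpace ℝ (Fin d), x ≠ 0 := by
      rw [MeasureTheory.ae_iff]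
      simpa using measure_singleton (0 : EuclideanSpace ℝ (Fin d))
    have hz' : (fun x => ENNReal.ofReal (u x)) =ᵐ[volume] 0 := by
      filter_upwards [hz, h0] with x hx hx0
      simp only [Pi.zero_apply, ENNReal.ofReal_eq_zero] at hx ⊢
      have hnx : 0 < ‖x‖ ^ 2 := pow_pos (norm_pos_iff.2 hx0) 2
      nlinarith [hu0 x]
    rw [lintegral_congr_ae hz']
    simp
  -- main case
  set a : ℝ := A.toReal with hadef
  set b : ℝ := B.toReal with hbdef
  have ha : 0 < a := ENNReal.toReal_pos hA0 hA.ne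
  have hb : 0 < b := ENNReal.toReal_pos hB0 hB.ne
  have hAa : A = ENNReal.ofReal a := (ENNReal.ofReal_toReal hA.ne).symm
  have hBb : B = ENNReal.ofReal b := (ENNReal.ofReal_toReal hB.ne).symm
  set D := (d : ℝ) * m + 2 * (m + 1) with hDdef
  set R : ℝ := a ^ (-(1 / D)) * b ^ ((m + 1) / D) with hRdef
  have hR : 0 < R := by positivity
  -- split
  have hsplit : ∫⁻ x, ENNReal.ofReal (u x) =
      (∫⁻ x in Metric.ball (0 : EuclideanSpace ℝ (Fin d)) R, ENNReal.ofReal (u x)) +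
      ∫⁻ x in (Metric.ball (0 : EuclideanSpace ℝ (Fin d)) R)ᶜ, ENNReal.ofReal (u x) :=
    (lintegral_add_compl _ measurableSet_ball).symm
  -- volume of the ball
  have hball : volume (Metric.ball (0 : EuclideanSpace ℝ (Fin d)) R) =
      ENNReal.ofReal (R ^ d * v) := by
    rw [Measure.addHaar_ball_of_pos volume 0 hR, finrank_euclideanSpace_fin,
      ENNReal.ofReal_mul (by positivity), hvdef,
      ENNReal.ofReal_toReal measure_ball_lt_top.ne]
  -- Hölder on the ball
  have hpq : Real.HolderConjugate ((m + 1) / m) (m + 1) := by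
    rw [Real.holderConjugate_iff]
    constructor
    · rw [lt_div_iff₀ hm]; linarith
    · rw [inv_div]
      field_simp
  have holder := ENNReal.lintegral_mul_le_Lp_mul_Lq
    (volume.restrict (Metric.ball (0 : EuclideanSpace ℝ (Fin d)) R)) hpq
    (f := fun _ => (1 : ℝ≥0∞)) (g := fun x => ENNReal.ofReal (u x))
    aemeasurable_const hu.ennreal_ofReal.aemeasurable
  simp only [Pi.mul_apply, one_mul, ENNReal.one_rpow, lintegral_one,
    Measure.restrict_apply_univ, one_div_div] at holder
  have hT1 : (∫⁻ x in Metric.ball (0 : EuclideanSpace ℝ (Fin d)) R, ENNReal.ofReal (u x)) ≤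
      ENNReal.ofReal ((R ^ d * v) ^ (m / (m + 1)) * a ^ (1 / (m + 1))) := by
    refine holder.trans ?_
    have hgq : (∫⁻ x in Metric.ball (0 : EuclideanSpace ℝ (Fin d)) R,
        ENNReal.ofReal (u x) ^ (m + 1)) ≤ A := by
      calc (∫⁻ x in Metric.ball (0 : EuclideanSpace ℝ (Fin d)) R,
          ENNReal.ofReal (u x) ^ (m + 1))
          = ∫⁻ x in Metric.ball (0 : EuclideanSpace ℝ (Fin d)) R,
            ENNReal.ofReal (u x ^ (m + 1)) := by
            refine lintegral_congr fun x => ?_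
            rw [ENNReal.ofReal_rpow_of_nonneg (hu0 x) (by linarith)]
        _ ≤ A := setLIntegral_le_lintegral _ _
    calc volume (Metric.ball (0 : EuclideanSpace ℝ (Fin d)) R) ^ (m / (m + 1)) *
          (∫⁻ x in Metric.ball (0 : EuclideanSpace ℝ (Fin d)) R,
            ENNReal.ofReal (u x) ^ (m + 1)) ^ (1 / (m + 1))
        ≤ ENNReal.ofReal (R ^ d * v) ^ (m / (m + 1)) * A ^ (1 / (m + 1)) := by
          rw [hball]
          exact mul_le_mul_right (ENNReal.rpow_le_rpow hgq (by positivity)) _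
      _ = ENNReal.ofReal ((R ^ d * v) ^ (m / (m + 1)) * a ^ (1 / (m + 1))) := by
          rw [hAa, ENNReal.ofReal_rpow_of_pos (by positivity),
            ENNReal.ofReal_rpow_of_pos ha, ← ENNReal.ofReal_mul (by positivity)]
  -- tail estimate
  have hT2 : (∫⁻ x in (Metric.ball (0 : EuclideanSpace ℝ (Fin d)) R)ᶜ,
      ENNReal.ofReal (u x)) ≤ ENNReal.ofReal (R⁻¹ ^ 2 * b) := by
    have step : (∫⁻ x in (Metric.ball (0 : EuclideanSpace ℝ (Fin d)) R)ᶜ,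
        ENNReal.ofReal (u x)) ≤
        ∫⁻ x in (Metric.ball (0 : EuclideanSpace ℝ (Fin d)) R)ᶜ,
          ENNReal.ofReal (R⁻¹ ^ 2 * (‖x‖ ^ 2 * u x)) := by
      refine setLIntegral_mono
        ((measurable_const.mul ((measurable_norm.pow_const 2).mul hu)).ennreal_ofReal)
        fun x hx => ?_
      apply ENNReal.ofReal_le_ofReal
      have hxR : R ≤ ‖x‖ := by
        simp only [Set.mem_compl_iff, Metric.mem_ball, dist_zero_right, not_lt] at hx
        exact hx
      have h2 : (1 : ℝ) ≤ R⁻¹ ^ 2 * ‖x‖ ^ 2 := by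
        rw [← mul_pow]
        have : (1 : ℝ) ≤ R⁻¹ * ‖x‖ := by
          rw [← inv_mul_cancel₀ hR.ne']
          exact mul_le_mul_of_nonneg_left hxR (by positivity)
        exact one_le_pow₀ this
      calc u x = 1 * u x := (one_mul _).symm
        _ ≤ R⁻¹ ^ 2 * ‖x‖ ^ 2 * u x := mul_le_mul_of_nonneg_right h2 (hu0 x)
        _ = R⁻¹ ^ 2 * (‖x‖ ^ 2 * u x) := by ring
    refine step.trans ?_
    calc (∫⁻ x in (Metric.ball (0 : EuclideanSpace ℝ (Fin d)) R)ᶜ,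
        ENNReal.ofReal (R⁻¹ ^ 2 * (‖x‖ ^ 2 * u x)))
        = ENNReal.ofReal (R⁻¹ ^ 2) *
          ∫⁻ x in (Metric.ball (0 : EuclideanSpace ℝ (Fin d)) R)ᶜ,
            ENNReal.ofReal (‖x‖ ^ 2 * u x) := by
          rw [← lintegral_const_mul _ (f := fun x => ENNReal.ofReal (‖x‖ ^ 2 * u x)) (((measurable_norm.pow_const 2).mul hu).ennreal_ofReal)]
          refine lintegral_congr fun x => ?_
          rw [← ENNReal.ofReal_mul (by positivity)]
      _ ≤ ENNReal.ofReal (R⁻¹ ^ 2) * B :=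
          mul_le_mul_right (setLIntegral_le_lintegral _ _) _
      _ = ENNReal.ofReal (R⁻¹ ^ 2 * b) := by
          rw [hBb, ← ENNReal.ofReal_mul (by positivity)]
  -- combine
  calc ∫⁻ x, ENNReal.ofReal (u x)
      ≤ ENNReal.ofReal ((R ^ d * v) ^ (m / (m + 1)) * a ^ (1 / (m + 1))) +
        ENNReal.ofReal (R⁻¹ ^ 2 * b) := by
        rw [hsplit]; exact add_le_add hT1 hT2
    _ = ENNReal.ofReal ((R ^ d * v) ^ (m / (m + 1)) * a ^ (1 / (m + 1)) +
        R⁻¹ ^ 2 * b) := (ENNReal.ofReal_add (by positivity) (by positivity)).symm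
    _ = ENNReal.ofReal ((v ^ (m / (m + 1)) + 1) *
        (a ^ (2 / D) * b ^ ((d : ℝ) * m / D))) := by
        rw [hRdef, hDdef]
        congr 1
        exact mcc_rpow_aux ha hb hv hm d hd
    _ = ENNReal.ofReal (v ^ (m / (m + 1)) + 1) * A ^ (2 / D) * B ^ ((d : ℝ) * m / D) := by
        rw [hAa, hBb, ENNReal.ofReal_rpow_of_pos ha, ENNReal.ofReal_rpow_of_pos hb,
          ENNReal.ofReal_mul (by positivity), ENNReal.ofReal_mul (by positivity), mul_assoc]
end
end

section
/- Nonexistence of positive radial steady profiles with zero contact angle for nonnegative chemical potential constant (radial case of Theorem 3.4(ii)–(iii)): Let d ≥ 3, m > 0, c ≥ 0 and R > 0. Then there is no twice continuously differentiable function u : [0,R] → ℝ such that u(r) > 0 for all r ∈ [0,R), u'(0) = 0, u(R) = 0, u'(R) = 0, and u''(r) + ((d−1)/r) u'(r) + u(r)^m + c = 0 for all r ∈ (0,R). -/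
open Real

noncomputable section

/-- **Nonexistence of positive radial steady profiles with zero contact angle for
nonnegative chemical potential constant** (radial case of Theorem 3.4(ii)–(iii)). -/
theorem no_positive_radial_steady_profile (d : ℕ) (hd : 3 ≤ d) (m c R : ℝ)
    (hm : 0 < m) (hc : 0 ≤ c) (hR : 0 < R)
    (u : ℝ → ℝ) (hu : ContDiffOn ℝ 2 u (Set.Icc 0 R))
    (hpos : ∀ r ∈ Set.Ico (0 : ℝ) R, 0 < u r)
    (hd0 : derivWithin u (Set.Icc 0 R) 0 = 0)
    (huR : u R = 0)
    (hdR : derivWithin u (Set.Icc 0 R) R = 0)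
    (hode : ∀ r ∈ Set.Ioo (0 : ℝ) R,
      derivWithin (derivWithin u (Set.Icc 0 R)) (Set.Icc 0 R) r +
        (((d : ℝ) - 1) / r) * derivWithin u (Set.Icc 0 R) r + u r ^ m + c = 0) :
    False := by
  set v : ℝ → ℝ := derivWithin u (Set.Icc 0 R) with hv
  have hUD : UniqueDiffOn ℝ (Set.Icc (0:ℝ) R) := uniqueDiffOn_Icc hR
  have hv1 : ContDiffOn ℝ 1 v (Set.Icc 0 R) := hu.derivWithin hUD (by norm_num)
  set w : ℝ → ℝ := fun r => r ^ (d - 1) * v r with hw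
  have hcont : ContinuousOn w (Set.Icc 0 R) :=
    (continuous_pow (d - 1)).continuousOn.mul hv1.continuousOn
  have hanti : StrictAntiOn w (Set.Icc 0 R) := by
    apply strictAntiOn_of_deriv_neg (convex_Icc 0 R) hcont
    intro x hx
    rw [interior_Icc] at hx
    have hx0 : (0:ℝ) < x := hx.1
    have hxIcc : x ∈ Set.Icc (0:ℝ) R := ⟨le_of_lt hx.1, le_of_lt hx.2⟩
    have hmem : Set.Icc (0:ℝ) R ∈ nhds x := Icc_mem_nhds hx.1 hx.2
    have hvx : HasDerivAt v (derivWithin v (Set.Icc 0 R) x) x :=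
      ((hv1.differentiableOn one_ne_zero x hxIcc).hasDerivWithinAt).hasDerivAt hmem
    have hwx : HasDerivAt w
        ((((d - 1 : ℕ) : ℝ)) * x ^ (d - 1 - 1) * v x
          + x ^ (d - 1) * derivWithin v (Set.Icc 0 R) x) x :=
      (hasDerivAt_pow (d - 1) x).mul hvx
    have hkey : x ^ (d - 1) = x ^ (d - 2) * x := by
      rw [← pow_succ]; congr 1; omega
    have hode' := hode x hx
    have hv' : derivWithin v (Set.Icc 0 R) x
        = -((((d : ℝ) - 1) / x) * v x) - (u x ^ m + c) := by
      rw [hv]; linarith [hode']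
    have hd1 : d - 1 - 1 = d - 2 := by omega
    have hdcast : (((d - 1 : ℕ) : ℝ)) = (d : ℝ) - 1 := by
      have : (1:ℕ) ≤ d := by omega
      push_cast [this]; ring
    have hA : 0 < u x ^ m + c := by
      have := hpos x ⟨le_of_lt hx0, hx.2⟩
      have := Real.rpow_pos_of_pos this m
      linarith
    have hxne : x ≠ 0 := ne_of_gt hx0
    have heq : (((d - 1 : ℕ) : ℝ)) * x ^ (d - 1 - 1) * v x
          + x ^ (d - 1) * derivWithin v (Set.Icc 0 R) x
        = -(x ^ (d - 1) * (u x ^ m + c)) := by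
      rw [hv', hd1, hdcast, hkey]
      field_simp
      ring
    rw [hwx.deriv, heq]
    have hxp : 0 < x ^ (d - 1) := pow_pos hx0 _
    nlinarith
  have h0 : (0:ℝ) ∈ Set.Icc (0:ℝ) R := ⟨le_refl 0, le_of_lt hR⟩
  have hRm : R ∈ Set.Icc (0:ℝ) R := ⟨le_of_lt hR, le_refl R⟩
  have := hanti h0 hRm hR
  have hw0 : w 0 = 0 := by
    show (0:ℝ) ^ (d - 1) * v 0 = 0
    rw [hd0]; ring
  have hwR : w R = 0 := by
    show R ^ (d - 1) * v R = 0
    rw [hdR]; ring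
  rw [hw0, hwR] at this
  exact lt_irrefl 0 this
end
end
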